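/- Let G be an abelian group with translation invariant probability measure ν. Let A, B ⊆ G satisfy ν_*(A+B) ≤ ν(A) + ν(B), and suppose Ĩ, J̃ ⊆ G are parallel Bohr intervals with ν(Ĩ) + ν(J̃) < 1, ν(A Δ Ĩ) = 0, and ν(B Δ J̃) = 0. Then A ⊆ Ĩ and B ⊆ J̃. -/

import Mathlib

open Pointwise

/-- A finitely additive, translation invariant measure on an abelian group `G`,
defined on an algebra `Meas` of "measurable" subsets of `G`, with values in `[0,∞]`. -/
structure FAM (G : Type*) [AddCommGroup G] where
  Meas : Set G → Prop
  m : Set G → ENNReal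
  meas_empty : Meas ∅
  meas_compl : ∀ {A : Set G}, Meas A → Meas Aᶜ
  meas_union : ∀ {A B : Set G}, Meas A → Meas B → Meas (A ∪ B)
  m_empty : m ∅ = 0
  m_union : ∀ {A B : Set G}, Meas A → Meas B → Disjoint A B → m (A ∪ B) = m A + m B
  m_mono : ∀ {A B : Set G}, Meas A → Meas B → A ⊆ B → m A ≤ m B
  meas_vadd : ∀ (t : G) {A : Set G}, Meas A → Meas (t +ᵥ A)
  m_vadd : ∀ (t : G) {A : Set G}, Meas A → m (t +ᵥ A) = m A

namespace FAM

variable {G : Type*} [AddCommGroup G] (μ : FAM G)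

/-- The inner measure associated to `μ`:
`μ_*(S) = sup { μ(C) : C ⊆ S, C measurable }`. -/
noncomputable def inn (S : Set G) : ENNReal := ⨆ (C : Set G) (_ : μ.Meas C ∧ C ⊆ S), μ.m C

/-- The stabilizer of a subset `C` of `G`: `H(C) = {g : C + g = C}`. -/
def stab (C : Set G) : Set G := {g : G | g +ᵥ C = C}

/-- `μ` is symmetric: `-A` is measurable and `μ(-A) = μ(A)` for measurable `A`. -/
def Symm : Prop := ∀ A : Set G, μ.Meas A → μ.Meas (-A) ∧ μ.m (-A) = μ.m A

end FAM


open Set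

namespace FAM
variable {G : Type*} [AddCommGroup G] (μ : FAM G)

lemma meas_univ : μ.Meas univ := by simpa using μ.meas_compl μ.meas_empty

lemma meas_inter {A B : Set G} (hA : μ.Meas A) (hB : μ.Meas B) : μ.Meas (A ∩ B) := by
  have h := μ.meas_compl (μ.meas_union (μ.meas_compl hA) (μ.meas_compl hB))
  simpa [Set.compl_union] using h

lemma meas_diff {A B : Set G} (hA : μ.Meas A) (hB : μ.Meas B) : μ.Meas (A \ B) :=
  μ.meas_inter hA (μ.meas_compl hB)

lemma m_le_one (hprob : μ.m Set.univ = 1) {A : Set G} (hA : μ.Meas A) : μ.m A ≤ 1 := by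
  rw [← hprob]; exact μ.m_mono hA μ.meas_univ (subset_univ A)

lemma m_diff_add {A B : Set G} (hA : μ.Meas A) (hB : μ.Meas B) :
    μ.m A = μ.m (A \ B) + μ.m (A ∩ B) := by
  conv_lhs => rw [← Set.diff_union_inter A B]
  exact μ.m_union (μ.meas_diff hA hB) (μ.meas_inter hA hB) disjoint_sdiff_inter

lemma m_union_le {A B : Set G} (hA : μ.Meas A) (hB : μ.Meas B) :
    μ.m (A ∪ B) ≤ μ.m A + μ.m B := by
  have h1 : A ∪ B = A ∪ (B \ A) := by simp
  rw [h1, μ.m_union hA (μ.meas_diff hB hA) disjoint_sdiff_right]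
  exact add_le_add_right (μ.m_mono (μ.meas_diff hB hA) hB Set.diff_subset) _

lemma m_null_of_subset {A B : Set G} (hB : μ.Meas B) (hBA : B ⊆ A) (hA : μ.Meas A)
    (h0 : μ.m A = 0) : μ.m B = 0 :=
  le_antisymm (h0 ▸ μ.m_mono hB hA hBA) zero_le

lemma m_sub_le {A B : Set G} (hA : μ.Meas A) (hB : μ.Meas B) :
    μ.m A ≤ μ.m (A \ B) + μ.m B := by
  rw [μ.m_diff_add hA hB]
  exact add_le_add_right (μ.m_mono (μ.meas_inter hA hB) hB inter_subset_right) _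

lemma m_biUnion {ι : Type*} (s : Finset ι) (f : ι → Set G)
    (hm : ∀ i ∈ s, μ.Meas (f i))
    (hd : ∀ i ∈ s, ∀ j ∈ s, i ≠ j → Disjoint (f i) (f j)) :
    μ.Meas (⋃ i ∈ s, f i) ∧ μ.m (⋃ i ∈ s, f i) = ∑ i ∈ s, μ.m (f i) := by
  classical
  induction s using Finset.induction_on with
  | empty => simpa using ⟨μ.meas_empty, μ.m_empty⟩
  | @insert a s ha ih =>
    have hms : ∀ i ∈ s, μ.Meas (f i) := fun i hi => hm i (Finset.mem_insert_of_mem hi)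
    have hds : ∀ i ∈ s, ∀ j ∈ s, i ≠ j → Disjoint (f i) (f j) := fun i hi j hj =>
      hd i (Finset.mem_insert_of_mem hi) j (Finset.mem_insert_of_mem hj)
    obtain ⟨hmeas, hsum⟩ := ih hms hds
    have hfa : μ.Meas (f a) := hm a (Finset.mem_insert_self a s)
    have hdisj : Disjoint (f a) (⋃ i ∈ s, f i) := by
      rw [Set.disjoint_iUnion₂_right]
      intro i hi
      exact hd a (Finset.mem_insert_self a s) i (Finset.mem_insert_of_mem hi)
        (fun h => ha (h ▸ hi))
    constructor
    · rw [Finset.set_biUnion_insert]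
      exact μ.meas_union hfa hmeas
    · rw [Finset.set_biUnion_insert, μ.m_union hfa hmeas hdisj, hsum,
        Finset.sum_insert ha]

end FAM
noncomputable abbrev ρ : ℝ → UnitAddCircle := fun x => (x : UnitAddCircle)

lemma rho_eq_iff {x y : ℝ} : ρ x = ρ y ↔ ∃ n : ℤ, x - y = n := by
  constructor
  · intro h
    have h2 : ((x - y : ℝ) : UnitAddCircle) = 0 := by
      have : ((x - y : ℝ) : UnitAddCircle) = ρ x - ρ y := by
        simp only [ρ]; push_cast; ring_nf; rfl
      rw [this, h, sub_self]
    rw [AddCircle.coe_eq_zero_iff] at h2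
    obtain ⟨n, hn⟩ := h2
    exact ⟨n, by simpa using hn.symm⟩
  · rintro ⟨n, hn⟩
    have : x = y + n := by linarith
    subst this; simp [ρ]

lemma arc_inter {u₁ v₁ u₂ v₂ : ℝ} (h1 : u₁ ≤ u₂) (h2 : v₁ ≤ v₂) (h3 : v₂ - u₁ < 1) :
    ρ '' Icc u₁ v₁ ∩ ρ '' Icc u₂ v₂ ⊆ ρ '' Icc u₂ v₁ := by
  rintro θ ⟨⟨x, hx, rfl⟩, ⟨y, hy, hyx⟩⟩
  obtain ⟨n, hn⟩ := rho_eq_iff.mp hyx.symm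
  have : n = 0 := by
    have h4 : (n:ℝ) < 1 := by
      have := hx.2; have := hy.1; nlinarith [hn]
    have h5 : (-1:ℝ) < n := by
      have := hx.1; have := hy.2; nlinarith [hn]
    have hn0 : n < 1 := by exact_mod_cast h4
    have hn1 : -1 < n := by exact_mod_cast h5
    omega
  have hxy : x = y := by rw [this] at hn; push_cast at hn; linarith
  exact ⟨x, ⟨by rw [hxy]; exact hy.1, hx.2⟩, rfl⟩

lemma arc_disjoint {u₁ v₁ u₂ v₂ : ℝ} (h1 : v₁ < u₂) (h2 : v₂ < u₁ + 1) :
    Disjoint (ρ '' Icc u₁ v₁) (ρ '' Icc u₂ v₂) := by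
  rw [Set.disjoint_left]
  rintro θ ⟨x, hx, rfl⟩ ⟨y, hy, hyx⟩
  obtain ⟨n, hn⟩ := rho_eq_iff.mp hyx.symm
  have h4 : (n:ℝ) < 0 := by have := hx.2; have := hy.1; nlinarith [hn]
  have h5 : (-1:ℝ) < n := by have := hx.1; have := hy.2; nlinarith [hn]
  have : (0:ℤ) < 0 := by
    have hn0 : n < 0 := by exact_mod_cast h4
    have hn1 : -1 < n := by exact_mod_cast h5
    omega
  omega

lemma arc_union {u v w : ℝ} (h1 : u ≤ v) (h2 : v ≤ w) :
    ρ '' Icc u w = ρ '' Icc u v ∪ ρ '' Icc v w := by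
  rw [← image_union, Icc_union_Icc_eq_Icc h1 h2]

section Arc
variable {G : Type*} [AddCommGroup G] (μ : FAM G) (τ : G →+ UnitAddCircle)

/-- The preimage under `τ` of the arc `ρ '' Icc u v`. -/
noncomputable def Karc (u v : ℝ) : Set G := τ ⁻¹' (ρ '' Icc u v)

variable (hprob : μ.m Set.univ = 1) (hsurj : Function.Surjective τ)
    (hτ : ∀ U : Set UnitAddCircle, IsOpen U → μ.Meas (τ ⁻¹' U))

lemma rho_continuous : Continuous ρ := AddCircle.continuous_mk' 1

include hτ in
lemma measK (u v : ℝ) : μ.Meas (Karc τ u v) := by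
  have hcl : IsClosed (ρ '' Icc u v) := (isCompact_Icc.image rho_continuous).isClosed
  have := μ.meas_compl (hτ _ hcl.isOpen_compl)
  simpa [Karc, Set.preimage_compl] using this

lemma K_mono {u v u' v' : ℝ} (h1 : u' ≤ u) (h2 : v ≤ v') : Karc τ u v ⊆ Karc τ u' v' :=
  Set.preimage_mono (Set.image_mono (Set.Icc_subset_Icc h1 h2))

lemma rho_sub (s t : ℝ) : ρ (s - t) = ρ s - ρ t := rfl
lemma rho_add' (s t : ℝ) : ρ (s + t) = ρ s + ρ t := rfl

include hsurj in
lemma K_shift (t u v : ℝ) : ∃ g : G, g +ᵥ Karc τ u v = Karc τ (u + t) (v + t) := by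
  obtain ⟨g, hg⟩ := hsurj (ρ t)
  refine ⟨g, ?_⟩
  ext x
  rw [Set.mem_vadd_set_iff_neg_vadd_mem]
  simp only [Karc, Set.mem_preimage, vadd_eq_add, Set.mem_image]
  constructor
  · rintro ⟨s, hs, hks⟩
    refine ⟨s + t, ⟨by linarith [hs.1], by linarith [hs.2]⟩, ?_⟩
    rw [rho_add', hks, map_add, map_neg, hg]
    abel
  · rintro ⟨s, hs, hsx⟩
    refine ⟨s - t, ⟨by linarith [hs.1], by linarith [hs.2]⟩, ?_⟩
    rw [rho_sub, hsx, map_add, map_neg, hg]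
    abel

include hsurj hτ in
lemma mK_shift (t u v : ℝ) : μ.m (Karc τ (u + t) (v + t)) = μ.m (Karc τ u v) := by
  obtain ⟨g, hg⟩ := K_shift τ hsurj t u v
  rw [← hg, μ.m_vadd g (measK μ τ hτ u v)]

include hsurj hτ in
lemma mK_norm (u v : ℝ) : μ.m (Karc τ u v) = μ.m (Karc τ 0 (v - u)) := by
  have := mK_shift μ τ hsurj hτ u 0 (v - u)
  simp only [zero_add] at this
  rw [← this]
  ring_nf

include hprob hsurj hτ in
lemma mK_point (u : ℝ) : μ.m (Karc τ u u) = 0 := by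
  by_contra hp
  set p := μ.m (Karc τ u u) with hpdef
  have hple : p ≤ 1 := μ.m_le_one hprob (measK μ τ hτ u u)
  have pne : p ≠ ⊤ := (lt_of_le_of_lt hple ENNReal.one_lt_top).ne
  have key : ∀ n : ℕ, (n : ENNReal) * p ≤ 1 := by
    intro n
    have hd2 : ∀ i j : ℕ, i < j → j < n →
        Disjoint (Karc τ (u + i / n) (u + i / n)) (Karc τ (u + j / n) (u + j / n)) := by
      intro i j hlt hj
      have hn : (0:ℝ) < n := by exact_mod_cast (Nat.zero_le j).trans_lt hj
      have h1 : u + (i:ℝ)/n < u + (j:ℝ)/n := by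
        have : (i:ℝ) < j := by exact_mod_cast hlt
        have := (div_lt_div_iff_of_pos_right hn).mpr this
        linarith
      have h2 : u + (j:ℝ)/n < u + (i:ℝ)/n + 1 := by
        have hj1 : (j:ℝ) < n := by exact_mod_cast hj
        have : (j:ℝ)/n < 1 := by rw [div_lt_one hn]; exact hj1
        have hi0 : (0:ℝ) ≤ (i:ℝ)/n := by positivity
        linarith
      exact Disjoint.preimage _ (arc_disjoint h1 h2)
    have hdisj : ∀ i ∈ Finset.range n, ∀ j ∈ Finset.range n, i ≠ j →
        Disjoint (Karc τ (u + i / n) (u + i / n)) (Karc τ (u + j / n) (u + j / n)) := by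
      intro i hi j hj hij
      simp only [Finset.mem_range] at hi hj
      rcases lt_or_gt_of_ne hij with h | h
      · exact hd2 i j h hj
      · exact (hd2 j i h hi).symm
    have hmeas : ∀ i ∈ Finset.range n, μ.Meas (Karc τ (u + i/n) (u + i/n)) :=
      fun i _ => measK μ τ hτ _ _
    obtain ⟨hmu, hsum⟩ := μ.m_biUnion (Finset.range n) _ hmeas hdisj
    have heq : ∀ i ∈ Finset.range n, μ.m (Karc τ (u + i/n) (u + i/n)) = p := by
      intro i _
      rw [mK_norm μ τ hsurj hτ, hpdef, mK_norm μ τ hsurj hτ u u]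
      norm_num
    rw [Finset.sum_congr rfl heq, Finset.sum_const, Finset.card_range, nsmul_eq_mul] at hsum
    rw [← hsum]
    exact μ.m_le_one hprob hmu
  obtain ⟨n, hn⟩ := ENNReal.exists_nat_gt (r := 1/p) (by simp [ENNReal.div_eq_top, hp, pne])
  have h1np : (1:ENNReal) < n * p := by
    rwa [ENNReal.div_lt_iff (Or.inl hp) (Or.inl pne)] at hn
  exact absurd (key n) (by simpa using not_le.mpr h1np)

end Arc

lemma arc_inter2 {s t : ℝ} (hs : 0 ≤ s) (ht : 0 ≤ t) (h1 : s + t ≤ 1) :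
    ρ '' Icc 0 s ∩ ρ '' Icc s (s+t) ⊆ ρ '' Icc 0 0 ∪ ρ '' Icc s s := by
  rintro θ ⟨⟨x, hx, rfl⟩, ⟨y, hy, hyx⟩⟩
  obtain ⟨n, hn⟩ := rho_eq_iff.mp hyx.symm
  have h4 : (n:ℝ) ≤ 0 := by have := hx.2; have := hy.1; nlinarith [hn]
  have h5 : (-1:ℝ) ≤ n := by have := hx.1; have := hy.2; nlinarith [hn]
  have hn0 : n ≤ 0 := by exact_mod_cast h4
  have hn1 : -1 ≤ n := by exact_mod_cast h5
  interval_cases n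
  · -- n = -1 : x = y - 1, so x = 0
    have hx0 : x = 0 := by
      push_cast at hn
      have := hy.2; have := hx.1; linarith
    exact Or.inl ⟨x, by simp [hx0], rfl⟩
  · -- n = 0 : x = y = s
    have hxs : x = s := by
      push_cast at hn
      have := hx.2; have := hy.1; linarith
    exact Or.inr ⟨x, by simp [hxs], rfl⟩

section Arc2
variable {G : Type*} [AddCommGroup G] (μ : FAM G) (τ : G →+ UnitAddCircle)
variable (hprob : μ.m Set.univ = 1) (hsurj : Function.Surjective τ)
    (hτ : ∀ U : Set UnitAddCircle, IsOpen U → μ.Meas (τ ⁻¹' U))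

include hprob hsurj hτ in
lemma mK_add {s t : ℝ} (hs : 0 ≤ s) (ht : 0 ≤ t) (hst : s + t ≤ 1) :
    μ.m (Karc τ 0 (s + t)) = μ.m (Karc τ 0 s) + μ.m (Karc τ 0 t) := by
  have hunion : Karc τ 0 (s+t) = Karc τ 0 s ∪ Karc τ s (s+t) := by
    simp only [Karc, ← Set.preimage_union, arc_union hs (by linarith : s ≤ s + t)]
  have hm2 : μ.m (Karc τ s (s+t)) = μ.m (Karc τ 0 t) := by
    rw [mK_norm μ τ hsurj hτ]; ring_nf
  have hK1 := measK μ τ hτ 0 s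
  have hK2 := measK μ τ hτ s (s+t)
  have hle : μ.m (Karc τ 0 (s+t)) ≤ μ.m (Karc τ 0 s) + μ.m (Karc τ 0 t) := by
    rw [hunion, ← hm2]; exact μ.m_union_le hK1 hK2
  have hinter0 : μ.m (Karc τ 0 s ∩ Karc τ s (s+t)) = 0 := by
    have hsub : Karc τ 0 s ∩ Karc τ s (s+t) ⊆ Karc τ 0 0 ∪ Karc τ s s := by
      simp only [Karc, ← Set.preimage_inter, ← Set.preimage_union]
      exact Set.preimage_mono (arc_inter2 hs ht hst)
    have h0 : μ.m (Karc τ 0 0 ∪ Karc τ s s) = 0 := by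
      have := μ.m_union_le (measK μ τ hτ 0 0) (measK μ τ hτ s s)
      rw [mK_point μ τ hprob hsurj hτ, mK_point μ τ hprob hsurj hτ] at this
      simpa using this
    exact μ.m_null_of_subset (μ.meas_inter hK1 hK2) hsub
      (μ.meas_union (measK μ τ hτ 0 0) (measK μ τ hτ s s)) h0
  have hge : μ.m (Karc τ 0 s) + μ.m (Karc τ 0 t) ≤ μ.m (Karc τ 0 (s+t)) := by
    have hd : μ.m (Karc τ s (s+t)) = μ.m (Karc τ s (s+t) \ Karc τ 0 s) := by
      rw [μ.m_diff_add hK2 hK1]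
      rw [Set.inter_comm] at hinter0
      rw [hinter0, add_zero]
    calc μ.m (Karc τ 0 s) + μ.m (Karc τ 0 t)
        = μ.m (Karc τ 0 s) + μ.m (Karc τ s (s+t) \ Karc τ 0 s) := by rw [← hm2, hd]
      _ = μ.m (Karc τ 0 s ∪ (Karc τ s (s+t) \ Karc τ 0 s)) :=
          (μ.m_union hK1 (μ.meas_diff hK2 hK1) disjoint_sdiff_right).symm
      _ ≤ μ.m (Karc τ 0 (s+t)) := by
          apply μ.m_mono (μ.meas_union hK1 (μ.meas_diff hK2 hK1)) (measK μ τ hτ 0 (s+t))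
          rw [hunion]
          exact Set.union_subset_union_right _ Set.diff_subset
  exact le_antisymm hle hge

include hprob in
lemma mK_one : μ.m (Karc τ 0 1) = 1 := by
  have h : ρ '' Icc 0 1 = Set.univ := by
    have := AddCircle.coe_image_Icc_eq (1:ℝ) 0
    simpa using this
  rw [Karc, h]
  simpa using hprob

include hprob hsurj hτ in
lemma mK_frac {n : ℕ} (hn : 0 < n) {k : ℕ} (hk : k ≤ n) :
    μ.m (Karc τ 0 ((k:ℝ) / n)) = (k : ENNReal) / n := by
  have hnR : (0:ℝ) < n := by exact_mod_cast hn
  set p1 := μ.m (Karc τ 0 (1 / (n:ℝ))) with hp1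
  have stage1 : ∀ k : ℕ, k ≤ n → μ.m (Karc τ 0 ((k:ℝ) / n)) = (k:ENNReal) * p1 := by
    intro k
    induction k with
    | zero => intro _; simp [mK_point μ τ hprob hsurj hτ 0]
    | succ k ih =>
      intro hk1
      have hkn : k ≤ n := by omega
      have hsplit : ((k+1:ℕ):ℝ)/n = (k:ℝ)/n + 1/n := by push_cast; ring
      have hcond : (k:ℝ)/n + 1/n ≤ 1 := by
        rw [← add_div, div_le_one hnR]
        exact_mod_cast hk1
      rw [hsplit, mK_add μ τ hprob hsurj hτ (by positivity) (by positivity) hcond,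
        ih hkn]
      push_cast
      ring
  have hnp : (n:ENNReal) * p1 = 1 := by
    have := stage1 n le_rfl
    rw [div_self hnR.ne'] at this
    rw [← this, ← mK_one μ τ hprob]
  have hp1v : p1 = 1 / (n:ENNReal) := by
    rw [ENNReal.eq_div_iff (by exact_mod_cast hn.ne' : (n:ENNReal) ≠ 0) (by simp)]
    exact hnp
  rw [stage1 k hk, hp1v]
  rw [ENNReal.div_eq_inv_mul, ENNReal.div_eq_inv_mul]
  ring

lemma natdiv_ofReal {j n : ℕ} (hn : 0 < n) :
    ((j:ENNReal))/n = ENNReal.ofReal ((j:ℝ)/n) := by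
  rw [ENNReal.ofReal_div_of_pos (by exact_mod_cast hn)]
  simp

lemma ennreal_le_of_forall_nat {a b : ENNReal} (hb : b ≠ ⊤)
    (h : ∀ n : ℕ, 0 < n → a ≤ b + ENNReal.ofReal (1/(n:ℝ))) : a ≤ b := by
  apply ENNReal.le_of_forall_pos_le_add
  intro ε hε _
  obtain ⟨n, hn⟩ := exists_nat_gt (1/(ε:ℝ))
  have hεR : (0:ℝ) < (ε:ℝ) := by exact_mod_cast hε
  have hnR : (0:ℝ) < n := lt_of_le_of_lt (by positivity) hn
  have hn0 : 0 < n := by exact_mod_cast hnR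
  refine (h n hn0).trans (add_le_add_right ?_ _)
  have h1 : (1:ℝ)/n ≤ ε := by
    rw [div_le_iff₀ hnR]
    rw [div_lt_iff₀ hεR] at hn
    nlinarith
  calc ENNReal.ofReal (1/(n:ℝ)) ≤ ENNReal.ofReal (ε:ℝ) := ENNReal.ofReal_le_ofReal h1
    _ = (ε : ENNReal) := ENNReal.ofReal_coe_nnreal

include hprob hsurj hτ in
lemma mK_len {u v : ℝ} (h0 : u ≤ v) (h1 : v - u ≤ 1) :
    μ.m (Karc τ u v) = ENNReal.ofReal (v - u) := by
  rw [mK_norm μ τ hsurj hτ]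
  set l := v - u with hl
  have hl0 : 0 ≤ l := by simp [hl]; linarith
  clear_value l
  rcases eq_or_lt_of_le h1 with heq | hlt1
  · rw [heq, mK_one μ τ hprob]
    simp
  · -- l < 1
    set x := μ.m (Karc τ 0 l) with hx
    have hxle : x ≤ 1 := μ.m_le_one hprob (measK μ τ hτ 0 l)
    have hxne : x ≠ ⊤ := (lt_of_le_of_lt hxle ENNReal.one_lt_top).ne
    have key : ∀ n : ℕ, 0 < n →
        (x ≤ ENNReal.ofReal l + ENNReal.ofReal (1/(n:ℝ)) ∧
         ENNReal.ofReal l ≤ x + ENNReal.ofReal (1/(n:ℝ))) := by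
      intro n hn
      have hnR : (0:ℝ) < n := by exact_mod_cast hn
      set k := ⌊l * n⌋₊ with hkdef
      have hk1 : (k:ℝ) ≤ l * n := Nat.floor_le (by positivity)
      have hk2 : l * n < (k:ℝ) + 1 := Nat.lt_floor_add_one _
      have hkltn : k < n := by
        have : l * n < n := by nlinarith
        have h2 : (k:ℝ) < n := lt_of_le_of_lt hk1 this
        exact_mod_cast h2
      have hdiv1 : (k:ℝ)/n ≤ l := by rw [div_le_iff₀ hnR]; linarith
      have hdiv2 : l ≤ ((k+1:ℕ):ℝ)/n := by rw [le_div_iff₀ hnR]; push_cast; linarith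
      have hlow : ENNReal.ofReal ((k:ℝ)/n) ≤ x := by
        rw [← natdiv_ofReal hn, ← mK_frac μ τ hprob hsurj hτ hn (le_of_lt hkltn)]
        exact μ.m_mono (measK μ τ hτ _ _) (measK μ τ hτ _ _) (K_mono τ le_rfl hdiv1)
      have hhigh : x ≤ ENNReal.ofReal (((k+1:ℕ):ℝ)/n) := by
        rw [← natdiv_ofReal hn, ← mK_frac μ τ hprob hsurj hτ hn (by omega : k+1 ≤ n)]
        exact μ.m_mono (measK μ τ hτ _ _) (measK μ τ hτ _ _) (K_mono τ le_rfl hdiv2)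
      have hsplit : ENNReal.ofReal (((k+1:ℕ):ℝ)/n) ≤
          ENNReal.ofReal ((k:ℝ)/n) + ENNReal.ofReal (1/(n:ℝ)) := by
        have : ((k+1:ℕ):ℝ)/n = (k:ℝ)/n + 1/n := by push_cast; ring
        rw [this]
        exact ENNReal.ofReal_add_le
      constructor
      · exact hhigh.trans (hsplit.trans (add_le_add_left (ENNReal.ofReal_le_ofReal hdiv1) _))
      · exact (ENNReal.ofReal_le_ofReal hdiv2).trans (hsplit.trans (add_le_add_left hlow _))
    have d1 : x ≤ ENNReal.ofReal l :=
      ennreal_le_of_forall_nat ENNReal.ofReal_ne_top (fun n hn => (key n hn).1)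
    have d2 : ENNReal.ofReal l ≤ x :=
      ennreal_le_of_forall_nat hxne (fun n hn => (key n hn).2)
    exact le_antisymm d1 d2

end Arc2
open Set
section Main
open Pointwise
variable {G : Type*} [AddCommGroup G] (μ : FAM G) (τ : G →+ UnitAddCircle)
variable (hprob : μ.m Set.univ = 1) (hsurj : Function.Surjective τ)
    (hτ : ∀ U : Set UnitAddCircle, IsOpen U → μ.Meas (τ ⁻¹' U))

lemma FAM.le_inn {C S : Set G} (hC : μ.Meas C) (hsub : C ⊆ S) : μ.m C ≤ μ.inn S := by
  rw [FAM.inn]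
  exact le_iSup_of_le C (le_iSup_of_le ⟨hC, hsub⟩ le_rfl)

lemma arc_vadd_mem {u v t : ℝ} {θ : UnitAddCircle} (h : θ ∈ ρ '' Icc u v) :
    ρ t + θ ∈ ρ '' Icc (u+t) (v+t) := by
  obtain ⟨w, hw, rfl⟩ := h
  exact ⟨w + t, ⟨by linarith [hw.1], by linarith [hw.2]⟩, by rw [rho_add']; exact add_comm _ _⟩

set_option maxHeartbeats 2000000 in
include hprob hsurj hτ in
lemma stray (a b c d : ℝ) (hab : 0 < b - a) (hcd : 0 < d - c)
    (hlt : (b - a) + (d - c) < 1)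
    (A B : Set G) (hA : μ.Meas A) (hB : μ.Meas B)
    (hsum : μ.inn (A + B) ≤ ENNReal.ofReal (b-a) + ENNReal.ofReal (d-c))
    (hIA : μ.m (Karc τ a b \ A) = 0) (hJB : μ.m (Karc τ c d \ B) = 0) :
    A ⊆ Karc τ a b := by
  intro x hxA
  by_contra hxn
  -- representative of τ x in [a, a+1)
  obtain ⟨r, hr, hrx⟩ : ∃ r ∈ Set.Ico a (a+1), ρ r = τ x := by
    have h := AddCircle.coe_image_Ico_eq (1:ℝ) a
    have : τ x ∈ ((↑) : ℝ → UnitAddCircle) '' Set.Ico a (a+1) := by rw [h]; trivial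
    obtain ⟨r, hr1, hr2⟩ := this
    exact ⟨r, hr1, hr2⟩
  have hbr : b < r := by
    by_contra hc
    push_neg at hc
    exact hxn ⟨r, ⟨hr.1, hc⟩, hrx⟩
  have hr1 : r < a + 1 := hr.2
  -- the window [p,q] ⊆ [c,d] with r+[p,q] in the complementary gap
  set m1 := max c (b + d - r) with hm1
  set m2 := min d (a + c + 1 - r) with hm2
  have hm12 : m1 < m2 := by
    rw [hm1, hm2, max_lt_iff, lt_min_iff, lt_min_iff]
    exact ⟨⟨by linarith, by linarith⟩, ⟨by linarith, by linarith⟩⟩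
  set p := (2*m1 + m2)/3 with hp
  set q := (m1 + 2*m2)/3 with hq
  have hm1p : m1 < p := by rw [hp]; linarith
  have hpq : p < q := by rw [hp, hq]; linarith
  have hqm2 : q < m2 := by rw [hq]; linarith
  have hcp : c ≤ p := le_of_lt (lt_of_le_of_lt (le_max_left _ _) hm1p)
  have hqd : q ≤ d := le_of_lt (lt_of_lt_of_le hqm2 (min_le_left _ _))
  have hrp : b + d < r + p := by
    have : b + d - r ≤ m1 := le_max_right _ _
    linarith
  have hrq : r + q < a + c + 1 := by
    have : m2 ≤ a + c + 1 - r := min_le_right _ _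
    linarith
  -- essential parts
  set E := A ∩ Karc τ a b with hE
  set F := B ∩ Karc τ c d with hF
  have hmeasE : μ.Meas E := μ.meas_inter hA (measK μ τ hτ a b)
  have hmeasF : μ.Meas F := μ.meas_inter hB (measK μ τ hτ c d)
  have hmE : μ.m E = ENNReal.ofReal (b - a) := by
    have h1 := μ.m_diff_add (measK μ τ hτ a b) hA
    rw [hIA, zero_add] at h1
    rw [hE, Set.inter_comm, ← h1, mK_len μ τ hprob hsurj hτ (by linarith) (by linarith)]
  have hFa : ∀ u v : ℝ, c ≤ u → u ≤ v → v ≤ d → μ.m (F ∩ Karc τ u v) = ENNReal.ofReal (v-u) := by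
    intro u v hu huv hv
    have hsubcd : Karc τ u v ⊆ Karc τ c d := K_mono τ hu hv
    have hnull : μ.m (Karc τ u v \ F) = 0 := by
      apply μ.m_null_of_subset (μ.meas_diff (measK μ τ hτ u v) hmeasF) ?_
        (μ.meas_diff (measK μ τ hτ c d) hB) hJB
      intro z hz
      refine ⟨hsubcd hz.1, fun hzB => hz.2 ⟨hzB, hsubcd hz.1⟩⟩
    have h1 := μ.m_diff_add (measK μ τ hτ u v) hmeasF
    rw [hnull, zero_add] at h1
    rw [Set.inter_comm, ← h1, mK_len μ τ hprob hsurj hτ huv (by linarith)]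
  have hFne : ∀ u v : ℝ, c ≤ u → u < v → v ≤ d → (F ∩ Karc τ u v).Nonempty := by
    intro u v hu huv hv
    rw [Set.nonempty_iff_ne_empty]
    intro hemp
    have := hFa u v hu (le_of_lt huv) hv
    rw [hemp, μ.m_empty] at this
    exact absurd this.symm (by simp [ENNReal.ofReal_pos]; linarith)
  -- choice of n
  have hqp : 0 < q - p := by linarith
  obtain ⟨n, hngt⟩ := exists_nat_gt (max (2*(d-c)/(b-a)) (2*(d-c)/(q-p)))
  have hmax1 : 2*(d-c)/(b-a) < n := lt_of_le_of_lt (le_max_left _ _) hngt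
  have hmax2 : 2*(d-c)/(q-p) < n := lt_of_le_of_lt (le_max_right _ _) hngt
  have hnpos : 0 < n := by
    have h0 : (0:ℝ) < 2*(d-c)/(b-a) := by positivity
    have := h0.trans hmax1
    exact_mod_cast this
  have hnR : (0:ℝ) < n := by exact_mod_cast hnpos
  set h := (d-c)/n with hh
  have hhpos : 0 < h := by positivity
  have hnh : n * h = d - c := by rw [hh]; field_simp [hnR.ne']
  have h2hba : 2*h ≤ b - a := by
    rw [div_lt_iff₀ hab] at hmax1
    have he : 2*h = (2*(d-c))/n := by rw [hh]; ring
    rw [he, div_le_iff₀ hnR]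
    nlinarith
  have h2hqp : 2*h < q - p := by
    rw [div_lt_iff₀ hqp] at hmax2
    have he : 2*h = (2*(d-c))/n := by rw [hh]; ring
    rw [he, div_lt_iff₀ hnR]
    nlinarith
  -- choose points y i ∈ F with representatives s i
  have hchoice : ∀ i : ℕ, ∃ ys : G × ℝ, i < n →
      ys.1 ∈ F ∧ ys.2 ∈ Set.Icc (c + i*h) (c + (i+1)*h) ∧ ρ ys.2 = τ ys.1 := by
    intro i
    by_cases hi : i < n
    · have hbd : c + (i+1)*h ≤ d := by
        have : ((i:ℝ)+1) ≤ n := by exact_mod_cast hi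
        nlinarith
      obtain ⟨y, hyF, hyK⟩ := hFne (c + i*h) (c + (i+1)*h)
        (by nlinarith [hhpos, (by positivity : (0:ℝ) ≤ (i:ℝ)*h)]) (by nlinarith) hbd
      obtain ⟨s, hsI, hsρ⟩ := hyK
      exact ⟨(y, s), fun _ => ⟨hyF, hsI, hsρ⟩⟩
    · exact ⟨(0, 0), fun hcon => absurd hcon hi⟩
  choose ys hys using hchoice
  set y : ℕ → G := fun i => (ys i).1 with hydef
  set s : ℕ → ℝ := fun i => (ys i).2 with hsdef
  have hyF : ∀ i, i < n → y i ∈ F := fun i hi => ((hys i) hi).1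
  have hsI : ∀ i, i < n → c + i*h ≤ s i ∧ s i ≤ c + (i+1)*h := fun i hi =>
    ⟨((hys i) hi).2.1.1, ((hys i) hi).2.1.2⟩
  have hsρ : ∀ i, i < n → ρ (s i) = τ (y i) := fun i hi => ((hys i) hi).2.2
  have hsc : ∀ i, i < n → c ≤ s i := by
    intro i hi
    have := (hsI i hi).1
    nlinarith [(by positivity : (0:ℝ) ≤ (i:ℝ)*h)]
  have hsd : ∀ i, i < n → s i ≤ d := by
    intro i hi
    have h1 := (hsI i hi).2
    have : ((i:ℝ)+1) ≤ n := by exact_mod_cast hi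
    nlinarith
  have hsmono : ∀ i k, i ≤ k → k < n → s i ≤ s k := by
    intro i k hik hk
    rcases eq_or_lt_of_le hik with rfl | hlt'
    · exact le_rfl
    · have h1 := (hsI i (lt_trans hlt' hk)).2
      have h2 := (hsI k hk).1
      have : ((i:ℝ)+1) ≤ (k:ℝ) := by exact_mod_cast hlt'
      nlinarith
  -- the pieces Q i
  set Q : ℕ → Set G := fun i => Nat.casesOn i (y 0 +ᵥ E)
    (fun j => (y (j+1) +ᵥ E) \ Karc τ (a + s 0) (b + s j)) with hQdef
  have hQ0 : Q 0 = y 0 +ᵥ E := rfl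
  have hQsuccdef : ∀ j, Q (j+1) = (y (j+1) +ᵥ E) \ Karc τ (a + s 0) (b + s j) := fun j => rfl
  have hvaddsub : ∀ i, i < n → y i +ᵥ E ⊆ Karc τ (a + s i) (b + s i) := by
    intro i hi z hz
    obtain ⟨e, he, rfl⟩ := hz
    have heK : τ e ∈ ρ '' Icc a b := he.2
    show τ (y i + e) ∈ ρ '' Icc (a + s i) (b + s i)
    have h1 : τ (y i + e) = ρ (s i) + τ e := by rw [map_add, hsρ i hi]
    rw [h1]
    exact arc_vadd_mem heK
  have hQsubarc : ∀ i, i < n → Q i ⊆ Karc τ (a + s i) (b + s i) := by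
    intro i hi
    cases i with
    | zero => exact hvaddsub 0 hi
    | succ j => exact (Set.diff_subset).trans (hvaddsub (j+1) hi)
  have hmeasQ : ∀ i, i < n → μ.Meas (Q i) := by
    intro i _
    cases i with
    | zero => exact μ.meas_vadd _ hmeasE
    | succ j => exact μ.meas_diff (μ.meas_vadd _ hmeasE) (measK μ τ hτ _ _)
  have hQAB : ∀ i, i < n → Q i ⊆ A + B := by
    intro i hi z hz
    have hz' : z ∈ y i +ᵥ E := by
      cases i with
      | zero => exact hz
      | succ j => exact hz.1
    obtain ⟨e, he, rfl⟩ := hz'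
    show y i + e ∈ A + B
    rw [add_comm (y i) e]
    exact Set.add_mem_add he.1 (hyF i hi).1
  have hQdisj : ∀ i j, i < j → j < n → Disjoint (Q i) (Q j) := by
    intro i j hij hj
    obtain ⟨k, rfl⟩ : ∃ k, j = k + 1 := ⟨j - 1, by omega⟩
    have hsub : Q i ⊆ Karc τ (a + s 0) (b + s k) := by
      refine (hQsubarc i (by omega)).trans (K_mono τ ?_ ?_)
      · have := hsmono 0 i (by omega) (by omega); linarith
      · have := hsmono i k (by omega) (by omega); linarith
    rw [hQsuccdef k]
    exact (disjoint_sdiff_right).mono_left hsub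
  have hmQ0 : μ.m (Q 0) = ENNReal.ofReal (b - a) := by
    rw [hQ0, μ.m_vadd _ hmeasE, hmE]
  have hmQsucc : ∀ j, j + 1 < n → ENNReal.ofReal (s (j+1) - s j) ≤ μ.m (Q (j+1)) := by
    intro j hj
    have hj' : j < n := by omega
    have hdel0 : 0 ≤ s (j+1) - s j := by
      have := hsmono j (j+1) (by omega) hj; linarith
    have hdel2 : s (j+1) - s j ≤ 2*h := by
      have h1 := (hsI j hj').1
      have h2 := (hsI (j+1) hj).2
      have hc1 : ((j+1:ℕ):ℝ) = (j:ℝ) + 1 := by push_cast; ring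
      rw [hc1] at h2
      nlinarith
    have hdiffadd := μ.m_diff_add (μ.meas_vadd (y (j+1)) hmeasE)
      (measK μ τ hτ (a + s 0) (b + s j))
    have hintersub : (y (j+1) +ᵥ E) ∩ Karc τ (a + s 0) (b + s j) ⊆
        Karc τ (a + s (j+1)) (b + s j) := by
      intro z hz
      have h1 : τ z ∈ ρ '' Icc (a + s (j+1)) (b + s (j+1)) := hvaddsub (j+1) hj hz.1
      have h2 : τ z ∈ ρ '' Icc (a + s 0) (b + s j) := hz.2
      refine arc_inter ?_ ?_ ?_ ⟨h2, h1⟩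
      · have := hsmono 0 (j+1) (by omega) hj; linarith
      · have := hsmono j (j+1) (by omega) hj; linarith
      · have := hsc 0 (by omega); have := hsd (j+1) hj; linarith
    have hmint : μ.m ((y (j+1) +ᵥ E) ∩ Karc τ (a + s 0) (b + s j)) ≤
        ENNReal.ofReal (b - a - (s (j+1) - s j)) := by
      calc μ.m ((y (j+1) +ᵥ E) ∩ Karc τ (a + s 0) (b + s j))
          ≤ μ.m (Karc τ (a + s (j+1)) (b + s j)) :=
            μ.m_mono (μ.meas_inter (μ.meas_vadd _ hmeasE) (measK μ τ hτ _ _))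
              (measK μ τ hτ _ _) hintersub
        _ = ENNReal.ofReal (b - a - (s (j+1) - s j)) := by
            rw [mK_len μ τ hprob hsurj hτ (by linarith) (by linarith)]
            congr 1
            ring
    have hEval : ENNReal.ofReal (b - a) ≤ μ.m (Q (j+1)) +
        ENNReal.ofReal (b - a - (s (j+1) - s j)) := by
      have hle := hdiffadd
      rw [μ.m_vadd _ hmeasE, hmE] at hle
      rw [hQsuccdef j]
      rw [hle]
      exact add_le_add_right hmint _
    have hsplit : ENNReal.ofReal (b - a) = ENNReal.ofReal (s (j+1) - s j) +
        ENNReal.ofReal (b - a - (s (j+1) - s j)) := by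
      rw [← ENNReal.ofReal_add hdel0 (by linarith)]
      congr 1
      ring
    rw [hsplit] at hEval
    exact (ENNReal.add_le_add_iff_right ENNReal.ofReal_ne_top).mp hEval
  -- the stray piece Qx
  set Qx := x +ᵥ (F ∩ Karc τ p q) with hQxdef
  have hmeasQx : μ.Meas Qx := μ.meas_vadd _ (μ.meas_inter hmeasF (measK μ τ hτ p q))
  have hmQx : μ.m Qx = ENNReal.ofReal (q - p) := by
    rw [hQxdef, μ.m_vadd _ (μ.meas_inter hmeasF (measK μ τ hτ p q)),
      hFa p q hcp (le_of_lt hpq) hqd]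
  have hQxAB : Qx ⊆ A + B := by
    rintro z ⟨f, hf, rfl⟩
    exact Set.add_mem_add hxA hf.1.1
  have hQxarc : Qx ⊆ Karc τ (p + r) (q + r) := by
    rintro z ⟨f, hf, rfl⟩
    show τ (x + f) ∈ ρ '' Icc (p + r) (q + r)
    have h1 : τ (x + f) = ρ r + τ f := by rw [map_add, ← hrx]
    rw [h1]
    exact arc_vadd_mem hf.2
  have hQxdisj : ∀ i, i < n → Disjoint (Q i) Qx := by
    intro i hi
    have h1 : Q i ⊆ Karc τ (a + c) (b + d) :=
      (hQsubarc i hi).trans (K_mono τ (by have := hsc i hi; linarith)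
        (by have := hsd i hi; linarith))
    have hdis : Disjoint (Karc τ (a+c) (b+d)) (Karc τ (p+r) (q+r)) :=
      Disjoint.preimage _ (arc_disjoint (by linarith) (by linarith))
    exact hdis.mono h1 hQxarc
  -- assemble C
  obtain ⟨hmeasU, hmU⟩ := μ.m_biUnion (Finset.range n) Q
    (fun i hi => hmeasQ i (Finset.mem_range.mp hi))
    (fun i hi j hj hij => by
      rcases lt_or_gt_of_ne hij with hlt' | hlt'
      · exact hQdisj i j hlt' (Finset.mem_range.mp hj)
      · exact (hQdisj j i hlt' (Finset.mem_range.mp hi)).symm)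
  set C := (⋃ i ∈ Finset.range n, Q i) ∪ Qx with hCdef
  have hmeasC : μ.Meas C := μ.meas_union hmeasU hmeasQx
  have hCAB : C ⊆ A + B := by
    rw [hCdef]
    refine Set.union_subset ?_ hQxAB
    exact Set.iUnion₂_subset fun i hi => hQAB i (Finset.mem_range.mp hi)
  have hdisjU : Disjoint (⋃ i ∈ Finset.range n, Q i) Qx := by
    rw [Set.disjoint_iUnion₂_left]
    exact fun i hi => hQxdisj i (Finset.mem_range.mp hi)
  have hmC : μ.m C = (∑ i ∈ Finset.range n, μ.m (Q i)) + ENNReal.ofReal (q - p) := by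
    rw [hCdef, μ.m_union hmeasU hmeasQx hdisjU, hmU, hmQx]
  -- lower bound on the sum
  have hS0 : 0 ≤ s (n-1) - s 0 := by
    have := hsmono 0 (n-1) (by omega) (by omega); linarith
  have hsumQ : ENNReal.ofReal (b - a) + ENNReal.ofReal (s (n-1) - s 0) ≤
      ∑ i ∈ Finset.range n, μ.m (Q i) := by
    obtain ⟨n', hn'⟩ : ∃ n', n = n' + 1 := ⟨n - 1, by omega⟩
    subst hn'
    rw [Finset.sum_range_succ']
    have hn'eq : n' + 1 - 1 = n' := by omega
    rw [hn'eq]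
    have h1 : ENNReal.ofReal (s n' - s 0) ≤ ∑ i ∈ Finset.range n', μ.m (Q (i+1)) := by
      calc ENNReal.ofReal (s n' - s 0)
          = ENNReal.ofReal (∑ i ∈ Finset.range n', (s (i+1) - s i)) := by
            rw [Finset.sum_range_sub]
        _ = ∑ i ∈ Finset.range n', ENNReal.ofReal (s (i+1) - s i) := by
            refine ENNReal.ofReal_sum_of_nonneg fun i hi => ?_
            have hi' := Finset.mem_range.mp hi
            have := hsmono i (i+1) (by omega) (by omega)
            linarith
        _ ≤ ∑ i ∈ Finset.range n', μ.m (Q (i+1)) :=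
            Finset.sum_le_sum fun i hi => hmQsucc i (by
              have := Finset.mem_range.mp hi; omega)
    rw [hmQ0, add_comm]
    exact add_le_add h1 le_rfl
  -- conclude
  have hSlow : d - c - 2*h ≤ s (n-1) - s 0 := by
    have h1 := (hsI (n-1) (by omega)).1
    have h2 := (hsI 0 (by omega)).2
    have hcast : ((n-1:ℕ):ℝ) = (n:ℝ) - 1 := by
      rw [Nat.cast_sub (by omega : 1 ≤ n)]; norm_num
    rw [hcast] at h1
    have hexp : ((n:ℝ) - 1) * h = (n:ℝ)*h - h := by ring
    rw [hexp, hnh] at h1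
    norm_num at h2
    linarith
  have hkey : ENNReal.ofReal (d - c) < ENNReal.ofReal (s (n-1) - s 0) +
      ENNReal.ofReal (q - p) := by
    rw [← ENNReal.ofReal_add hS0 (le_of_lt hqp)]
    rw [ENNReal.ofReal_lt_ofReal_iff (by linarith)]
    linarith
  have hfin : ENNReal.ofReal (b-a) + ENNReal.ofReal (d-c) < μ.m C := by
    have hstep : ENNReal.ofReal (b-a) + (ENNReal.ofReal (s (n-1) - s 0) +
        ENNReal.ofReal (q-p)) ≤ μ.m C := by
      rw [hmC, ← add_assoc]
      exact add_le_add_left hsumQ _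
    exact lt_of_lt_of_le (ENNReal.add_lt_add_left ENNReal.ofReal_ne_top hkey) hstep
  have hinn := μ.le_inn hmeasC hCAB
  exact absurd hsum (not_le.mpr (lt_of_lt_of_le hfin hinn))

end Main

/-- if `ν_*(A+B) ≤ ν(A) + ν(B)` and `Ĩ, J̃` are parallel Bohr intervals
with `ν(Ĩ) + ν(J̃) < 1`, `A ∼_ν Ĩ` and `B ∼_ν J̃`, then `A ⊆ Ĩ` and `B ⊆ J̃`. -/
theorem essential_move_interval {G : Type*} [AddCommGroup G] (μ : FAM G)
    (hprob : μ.m Set.univ = 1)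
    (τ : G →+ UnitAddCircle) (hsurj : Function.Surjective τ)
    (hτ : ∀ U : Set UnitAddCircle, IsOpen U → μ.Meas (τ ⁻¹' U))
    (a b c d : ℝ) (hab : 0 < b - a) (hab1 : b - a ≤ 1)
    (hcd : 0 < d - c) (hcd1 : d - c ≤ 1)
    (I' J' : Set G)
    (hI' : I' = τ ⁻¹' ((fun x : ℝ => (x : UnitAddCircle)) '' Set.Icc a b))
    (hJ' : J' = τ ⁻¹' ((fun x : ℝ => (x : UnitAddCircle)) '' Set.Icc c d))
    (A B : Set G) (hA : μ.Meas A) (hB : μ.Meas B)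
    (hsum : μ.inn (A + B) ≤ μ.m A + μ.m B)
    (hIJ : μ.m I' + μ.m J' < 1)
    (hAI : μ.m ((A \ I') ∪ (I' \ A)) = 0)
    (hBJ : μ.m ((B \ J') ∪ (J' \ B)) = 0) :
    A ⊆ I' ∧ B ⊆ J' := by
  have hIK : I' = Karc τ a b := hI'
  have hJK : J' = Karc τ c d := hJ'
  subst hIK hJK
  clear hI' hJ'
  have hmI : μ.m (Karc τ a b) = ENNReal.ofReal (b - a) :=
    mK_len μ τ hprob hsurj hτ (by linarith) hab1
  have hmJ : μ.m (Karc τ c d) = ENNReal.ofReal (d - c) :=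
    mK_len μ τ hprob hsurj hτ (by linarith) hcd1
  have hIJ' : (b - a) + (d - c) < 1 := by
    rw [hmI, hmJ, ← ENNReal.ofReal_add (le_of_lt hab) (le_of_lt hcd)] at hIJ
    have := ENNReal.ofReal_lt_one.mp hIJ
    linarith
  have hmeasI := measK μ τ hτ a b
  have hmeasJ := measK μ τ hτ c d
  -- null pieces
  have hAI1 : μ.m (A \ Karc τ a b) = 0 :=
    μ.m_null_of_subset (μ.meas_diff hA hmeasI) Set.subset_union_left
      (μ.meas_union (μ.meas_diff hA hmeasI) (μ.meas_diff hmeasI hA)) hAI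
  have hIA1 : μ.m (Karc τ a b \ A) = 0 :=
    μ.m_null_of_subset (μ.meas_diff hmeasI hA) Set.subset_union_right
      (μ.meas_union (μ.meas_diff hA hmeasI) (μ.meas_diff hmeasI hA)) hAI
  have hBJ1 : μ.m (B \ Karc τ c d) = 0 :=
    μ.m_null_of_subset (μ.meas_diff hB hmeasJ) Set.subset_union_left
      (μ.meas_union (μ.meas_diff hB hmeasJ) (μ.meas_diff hmeasJ hB)) hBJ
  have hJB1 : μ.m (Karc τ c d \ B) = 0 :=
    μ.m_null_of_subset (μ.meas_diff hmeasJ hB) Set.subset_union_right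
      (μ.meas_union (μ.meas_diff hB hmeasJ) (μ.meas_diff hmeasJ hB)) hBJ
  -- μ A = ofReal (b-a), μ B = ofReal (d-c)
  have hmA : μ.m A = ENNReal.ofReal (b - a) := by
    have h1 := μ.m_diff_add hA hmeasI
    have h2 := μ.m_diff_add hmeasI hA
    rw [hAI1, zero_add] at h1
    rw [hIA1, zero_add] at h2
    rw [h1, Set.inter_comm, ← h2, hmI]
  have hmB : μ.m B = ENNReal.ofReal (d - c) := by
    have h1 := μ.m_diff_add hB hmeasJ
    have h2 := μ.m_diff_add hmeasJ hB
    rw [hBJ1, zero_add] at h1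
    rw [hJB1, zero_add] at h2
    rw [h1, Set.inter_comm, ← h2, hmJ]
  have hsum1 : μ.inn (A + B) ≤ ENNReal.ofReal (b-a) + ENNReal.ofReal (d-c) := by
    rw [← hmA, ← hmB]; exact hsum
  have hsum2 : μ.inn (B + A) ≤ ENNReal.ofReal (d-c) + ENNReal.ofReal (b-a) := by
    rw [add_comm B A, add_comm (ENNReal.ofReal (d-c))]
    exact hsum1
  exact ⟨stray μ τ hprob hsurj hτ a b c d hab hcd hIJ' A B hA hB hsum1 hIA1 hJB1,
    stray μ τ hprob hsurj hτ c d a b hcd hab (by linarith) B A hB hA hsum2 hJB1 hIA1⟩
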